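/- Let V be a finite-dimensional real vector space, let μ be an inner product on V, let Φ' be a finite set of increasing filtrations of V which has a compatible splitting, and let Φ be a subset of Φ'. Assume that the family consisting of the μ-orthogonal splittings of the filtrations in Φ is compatible. Then there exists a linear automorphism g of V with g(W_k) = W_k for every W ∈ Φ and every k ∈ ℤ, such that the family consisting of the μ-orthogonal splittings of the filtrations gW' for W' ∈ Φ' (where (gW')_k := g(W'_k)) is compatible. -/

import Mathlib

/-- An *increasing filtration* of a real vector space `V`: a monotone family of
subspaces indexed by `ℤ` which is `⊥` for all sufficiently small indices and `⊤`
for all sufficiently large indices. -/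
def IsIncFiltration {V : Type*} [AddCommGroup V] [Module ℝ V]
    (W : ℤ → Submodule ℝ V) : Prop :=
  Monotone W ∧ (∃ a : ℤ, ∀ k : ℤ, k ≤ a → W k = ⊥) ∧ (∃ b : ℤ, ∀ k : ℤ, b ≤ k → W k = ⊤)

/-- The `μ`-orthogonal splitting of an increasing filtration `W`:
`s_W(k) = W_k ⊓ (W_{k-1})^{⊥_μ}`. -/
def orthSplit {V : Type*} [AddCommGroup V] [Module ℝ V]
    (μ : LinearMap.BilinForm ℝ V) (W : ℤ → Submodule ℝ V) (k : ℤ) : Submodule ℝ V :=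
  W k ⊓ μ.orthogonal (W (k - 1))

/-- `s` is a splitting of the increasing filtration `W`: the subspaces `s k` are
independent and `W k = ⊕_{j ≤ k} s j` for every `k`. -/
def IsSplitting {V : Type*} [AddCommGroup V] [Module ℝ V]
    (W : ℤ → Submodule ℝ V) (s : ℤ → Submodule ℝ V) : Prop :=
  iSupIndep s ∧ ∀ k : ℤ, W k = ⨆ j ∈ {j : ℤ | j ≤ k}, s j

/-- A family of splittings `s i` (of filtrations indexed by `i : ι`) is *compatible*
if there is a direct sum decomposition `V = ⊕_{w ∈ ℤ^ι} V[w]`, with only finitely many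
nonzero summands, such that `s i k = ⊕_{w : w i = k} V[w]` for every `i` and `k`. -/
def CompatibleFamily {V : Type*} [AddCommGroup V] [Module ℝ V] {ι : Type*}
    (s : ι → ℤ → Submodule ℝ V) : Prop :=
  ∃ D : (ι → ℤ) → Submodule ℝ V,
    iSupIndep D ∧ iSup D = ⊤ ∧ {w : ι → ℤ | D w ≠ ⊥}.Finite ∧
    ∀ (i : ι) (k : ℤ), s i k = ⨆ w ∈ {w : ι → ℤ | w i = k}, D w



open Module Submodule DirectSum

set_option linter.unusedSectionVars false
section Aux
variable {V : Type*} [AddCommGroup V] [Module ℝ V]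

section PosDef
variable [FiniteDimensional ℝ V] {μ : LinearMap.BilinForm ℝ V}

lemma my_isRefl (hμsymm : ∀ x y : V, μ x y = μ y x) : μ.IsRefl :=
  fun x y h => by rw [hμsymm]; exact h

lemma my_inf_orthogonal_eq_bot (hμpos : ∀ x : V, x ≠ 0 → 0 < μ x x)
    (N : Submodule ℝ V) : N ⊓ μ.orthogonal N = ⊥ := by
  rw [eq_bot_iff]
  rintro x ⟨hx1, hx2⟩
  by_contra hx0
  have := (hx2 x hx1)
  exact absurd this (ne_of_gt (hμpos x (by simpa using hx0)))

lemma my_isCompl_orthogonal (hμsymm : ∀ x y : V, μ x y = μ y x)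
    (hμpos : ∀ x : V, x ≠ 0 → 0 < μ x x) (N : Submodule ℝ V) :
    IsCompl N (μ.orthogonal N) := by
  apply LinearMap.BilinForm.isCompl_orthogonal_of_restrict_nondegenerate (my_isRefl hμsymm)
  refine (LinearMap.IsRefl.nondegenerate_iff_separatingLeft ?_).mpr ?_
  · intro x y h
    simp only [LinearMap.BilinForm.restrict_apply, LinearMap.domRestrict_apply] at h ⊢
    rw [hμsymm]; exact h
  intro x hx
  ext
  by_contra h0
  have := hx x
  simp only [LinearMap.BilinForm.restrict_apply] at this
  exact absurd this (ne_of_gt (hμpos x.1 (by simpa using h0)))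

lemma my_sup_inf_orthogonal (hμsymm : ∀ x y : V, μ x y = μ y x)
    (hμpos : ∀ x : V, x ≠ 0 → 0 < μ x x) {N M : Submodule ℝ V} (hNM : N ≤ M) :
    N ⊔ (M ⊓ μ.orthogonal N) = M := by
  have h := my_isCompl_orthogonal hμsymm hμpos N
  have := sup_inf_assoc_of_le (μ.orthogonal N) hNM
  rw [h.sup_eq_top, top_inf_eq] at this
  rw [inf_comm M (μ.orthogonal N)]
  exact this.symm

lemma my_inf_orthogonal_eq (hμpos : ∀ x : V, x ≠ 0 → 0 < μ x x)
    {N M X : Submodule ℝ V} (hX : N ⊔ X = M) (hXN : X ≤ μ.orthogonal N) :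
    M ⊓ μ.orthogonal N = X := by
  apply le_antisymm
  · rintro x ⟨hx1, hx2⟩
    rw [← hX] at hx1
    obtain ⟨n, hn, t, ht, rfl⟩ := Submodule.mem_sup.mp hx1
    have hn2 : n ∈ μ.orthogonal N := by
      have : n = (n + t) - t := by abel
      rw [this]
      exact Submodule.sub_mem _ hx2 (hXN ht)
    have : n = 0 := by
      have := my_inf_orthogonal_eq_bot hμpos N (μ := μ)
      rw [eq_bot_iff] at this
      simpa using this ⟨hn, hn2⟩
    simpa [this] using ht
  · exact le_inf (le_of_le_of_eq le_sup_right hX) hXN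

lemma my_filtration_eq_sup_orthSplit (hμsymm : ∀ x y : V, μ x y = μ y x)
    (hμpos : ∀ x : V, x ≠ 0 → 0 < μ x x) {W : ℤ → Submodule ℝ V}
    (hW : IsIncFiltration W) (k : ℤ) :
    W k = ⨆ j ∈ {j : ℤ | j ≤ k}, orthSplit μ W j := by
  obtain ⟨hmono, ⟨a, ha⟩, -⟩ := hW
  apply le_antisymm
  · -- prove ∀ k, W k ≤ ⨆ j ≤ k, orthSplit μ W j
    have key : ∀ k : ℤ, a ≤ k → W k ≤ ⨆ j ∈ {j : ℤ | j ≤ k}, orthSplit μ W j := by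
      refine Int.le_induction ?_ ?_
      · rw [ha a le_rfl]; exact bot_le
      · intro n hn ih
        have hsplit : W n ⊔ (W (n+1) ⊓ μ.orthogonal (W n)) = W (n+1) :=
          my_sup_inf_orthogonal hμsymm hμpos (hmono (by omega))
        rw [← hsplit]
        apply sup_le
        · refine le_trans ih (biSup_mono ?_)
          intro j hj; simp only [Set.mem_setOf_eq] at *; omega
        · have : W (n+1) ⊓ μ.orthogonal (W n) = orthSplit μ W (n+1) := by
            unfold orthSplit
            norm_num
          rw [this]
          exact le_biSup _ (by simp)
    rcases le_or_gt a k with h | h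
    · exact key k h
    · rw [ha k (by omega)]; exact bot_le
  · apply iSup₂_le
    intro j hj
    exact le_trans inf_le_left (hmono hj)

end PosDef
end Aux
section Internal
variable {V : Type*} [AddCommGroup V] [Module ℝ V]
variable {κ : Type*} [DecidableEq κ] {U : κ → Submodule ℝ V}

noncomputable def myEquiv (h : DirectSum.IsInternal U) : (⨁ i, U i) ≃ₗ[ℝ] V :=
  LinearEquiv.ofBijective (DirectSum.coeLinearMap U) h

lemma my_mem_biSup_iff (h : DirectSum.IsInternal U) (A : Set κ) (x : V) :
    x ∈ (⨆ p ∈ A, U p) ↔ ∀ p ∉ A, (myEquiv h).symm x p = 0 := by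
  constructor
  · intro hx p hp
    have hK : (⨆ q ∈ A, U q) ≤ LinearMap.ker
        ((DFinsupp.lapply p).comp ((myEquiv h).symm : V →ₗ[ℝ] ⨁ i, U i)) := by
      refine iSup₂_le fun q hq => fun u hu => ?_
      have hqp : q ≠ p := fun hqp => hp (hqp ▸ hq)
      simp only [LinearMap.mem_ker, LinearMap.comp_apply, DFinsupp.lapply_apply,
        LinearEquiv.coe_coe]
      exact h.ofBijective_coeLinearMap_of_mem_ne hqp hu
    simpa using hK hx
  · intro hx
    classical
    have hx2 : x = DirectSum.coeLinearMap U ((myEquiv h).symm x) :=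
      ((myEquiv h).apply_symm_apply x).symm
    rw [hx2, ← DirectSum.sum_support_of ((myEquiv h).symm x), map_sum]
    apply Submodule.sum_mem
    intro p hp
    rw [DirectSum.coeLinearMap_of]
    have hpA : p ∈ A := by
      by_contra hpA
      exact (DFinsupp.mem_support_iff.mp hp) (hx p hpA)
    exact (le_biSup _ hpA : U p ≤ _) (Submodule.coe_mem _)

lemma my_eq_zero_of_forall (h : DirectSum.IsInternal U) (x : V)
    (hx : ∀ p, (myEquiv h).symm x p = 0) : x = 0 := by
  have : (myEquiv h).symm x = 0 := DFinsupp.ext hx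
  have := congrArg (myEquiv h) this
  simpa using this

lemma my_disjoint_biSup (h : DirectSum.IsInternal U) {A B : Set κ}
    (hAB : ∀ p, p ∈ A → p ∈ B → False) :
    Disjoint (⨆ p ∈ A, U p) (⨆ p ∈ B, U p) := by
  rw [disjoint_iff, eq_bot_iff]
  rintro x ⟨h1, h2⟩
  rw [SetLike.mem_coe, my_mem_biSup_iff h A] at h1
  rw [SetLike.mem_coe, my_mem_biSup_iff h B] at h2
  have hx0 : x = 0 := my_eq_zero_of_forall h x (fun p => by
    by_cases hA : p ∈ A
    · exact h2 p (fun hB => hAB p hA hB)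
    · exact h1 p hA)
  simp [hx0]

end Internal
section Reindex
variable {V : Type*} [AddCommGroup V] [Module ℝ V] {κ κ' : Type*}

lemma my_biSup_le_eq (D : κ → Submodule ℝ V) (f : κ → ℤ) (k : ℤ) :
    (⨆ j ∈ {j : ℤ | j ≤ k}, ⨆ w ∈ {w : κ | f w = j}, D w) = ⨆ w ∈ {w : κ | f w ≤ k}, D w := by
  apply le_antisymm
  · refine iSup₂_le fun j hj => iSup₂_le fun w hw => ?_
    exact le_biSup _ (show f w ≤ k by rw [hw]; exact hj)
  · refine iSup₂_le fun w hw => ?_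
    refine le_trans (le_biSup _ (rfl : f w = f w) :
      D w ≤ ⨆ w' ∈ {w' : κ | f w' = f w}, D w') ?_
    exact le_biSup (fun j => ⨆ w' ∈ {w' : κ | f w' = j}, D w') (hw : f w ≤ k)

lemma my_biSup_fiber (D : κ → Submodule ℝ V) (r : κ → κ') (A : Set κ') :
    (⨆ w ∈ {w : κ | r w ∈ A}, D w) = ⨆ v ∈ A, ⨆ w ∈ {w : κ | r w = v}, D w := by
  apply le_antisymm
  · refine iSup₂_le fun w hw => ?_
    refine le_trans (le_biSup _ (rfl : r w = r w) :
      D w ≤ ⨆ w' ∈ {w' : κ | r w' = r w}, D w') ?_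
    exact le_biSup (fun v => ⨆ w' ∈ {w' : κ | r w' = v}, D w') (hw : r w ∈ A)
  · refine iSup₂_le fun v hv => iSup₂_le fun w hw => ?_
    exact le_biSup _ (show r w ∈ A from hw ▸ hv)

lemma my_span_basis [DecidableEq κ] {P : κ → Submodule ℝ V} {α : κ → Type*}
    (bP : ∀ w, Basis (α w) ℝ (P w)) (w : κ) :
    P w = Submodule.span ℝ (Set.range (fun a => ((bP w a : V)))) := by
  have h1 : Submodule.span ℝ (Set.range (bP w)) = (⊤ : Submodule ℝ (P w)) :=
    Basis.span_eq (bP w)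
  have h2 := congrArg (Submodule.map (P w).subtype) h1
  rw [Submodule.map_span, Submodule.map_subtype_top] at h2
  have h3 : (P w).subtype '' Set.range ⇑(bP w) = Set.range (fun a => ((bP w a : V))) := by
    rw [← Set.range_comp]; rfl
  rw [h3] at h2
  exact h2.symm

lemma my_exists_equiv [FiniteDimensional ℝ V] [DecidableEq κ] {D T : κ → Submodule ℝ V}
    (h1 : DirectSum.IsInternal D) (h2 : DirectSum.IsInternal T)
    (hrank : ∀ w, Module.finrank ℝ (D w) = Module.finrank ℝ (T w)) :
    ∃ g : V ≃ₗ[ℝ] V, ∀ w, Submodule.map (g : V →ₗ[ℝ] V) (D w) = T w := by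
  set bD := fun w => Module.finBasis ℝ (D w) with hbD
  set bT := fun w => (Module.finBasis ℝ (T w)).reindex (finCongr (hrank w)).symm with hbT
  set B1 := h1.collectedBasis bD with hB1
  set B2 := h2.collectedBasis bT with hB2
  set g := B1.equiv B2 (Equiv.refl _) with hg
  refine ⟨g, fun w => ?_⟩
  rw [my_span_basis bD w, my_span_basis bT w, Submodule.map_span, ← Set.range_comp]
  have hfun : ((g : V →ₗ[ℝ] V) ∘ fun a => ((bD w a : V))) = fun a => ((bT w a : V)) := by
    funext a
    show g (bD w a) = (bT w a : V)
    have e1 : ((bD w a : V)) = B1 ⟨w, a⟩ := by rw [hB1, h1.collectedBasis_coe]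
    have e2 : ((bT w a : V)) = B2 ⟨w, a⟩ := by rw [hB2, h2.collectedBasis_coe]
    rw [e1, e2, hg, Basis.equiv_apply, Equiv.refl_apply]
  rw [hfun]

end Reindex
set_option maxHeartbeats 2000000 in
theorem exists_automorphism_making_splittings_compatible
    {V : Type*} [AddCommGroup V] [Module ℝ V] [FiniteDimensional ℝ V]
    (μ : LinearMap.BilinForm ℝ V)
    (hμsymm : ∀ x y : V, μ x y = μ y x) (hμpos : ∀ x : V, x ≠ 0 → 0 < μ x x)
    (Φ' : Set (ℤ → Submodule ℝ V)) (hΦ'fin : Φ'.Finite)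
    (hΦ'fil : ∀ W ∈ Φ', IsIncFiltration W)
    (hΦ'compat : ∃ s : (ℤ → Submodule ℝ V) → ℤ → Submodule ℝ V,
      (∀ W ∈ Φ', IsSplitting W (s W)) ∧ CompatibleFamily (fun W : Φ' => s W.1))
    (Φ : Set (ℤ → Submodule ℝ V)) (hΦ : Φ ⊆ Φ')
    (hcompat : CompatibleFamily (fun W : Φ => orthSplit μ W.1)) :
    ∃ g : V ≃ₗ[ℝ] V,
      (∀ W ∈ Φ, ∀ k : ℤ, Submodule.map (g : V →ₗ[ℝ] V) (W k) = W k) ∧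
      CompatibleFamily (fun W' : Φ' =>
        orthSplit μ (fun k => Submodule.map (g : V →ₗ[ℝ] V) (W'.1 k))) := by
  classical
  obtain ⟨s, hs, D, hDindep, hDtop, hDfin, hDs⟩ := hΦ'compat
  obtain ⟨U, hUindep, hUtop, hUfin, hUs⟩ := hcompat
  have hDint : DirectSum.IsInternal D :=
    DirectSum.isInternal_submodule_of_iSupIndep_of_iSup_eq_top hDindep hDtop
  have hUint : DirectSum.IsInternal U :=
    DirectSum.isInternal_submodule_of_iSupIndep_of_iSup_eq_top hUindep hUtop
  set r : ((↥Φ') → ℤ) → ((↥Φ) → ℤ) := fun w W => w (Set.inclusion hΦ W) with hr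
  set E : ((↥Φ) → ℤ) → Submodule ℝ V := fun v => ⨆ w ∈ {w | r w = v}, D w with hE
  -- (F1)
  have hF1 : ∀ (W' : ↥Φ') (k : ℤ), W'.1 k = ⨆ w ∈ {w : (↥Φ') → ℤ | w W' ≤ k}, D w := by
    intro W' k
    rw [(hs W'.1 W'.2).2 k, ← my_biSup_le_eq D (fun w => w W') k]
    apply biSup_congr
    intro j _
    exact hDs W' j
  -- (F2)
  have hF2 : ∀ (W : ↥Φ) (k : ℤ), W.1 k = ⨆ v ∈ {v : (↥Φ) → ℤ | v W ≤ k}, U v := by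
    intro W k
    rw [my_filtration_eq_sup_orthSplit hμsymm hμpos (hΦ'fil W.1 (hΦ W.2)) k,
      ← my_biSup_le_eq U (fun v => v W) k]
    apply biSup_congr
    intro j _
    exact hUs W j
  -- orthogonality of the U pieces
  have hUW1 : ∀ (v : (↥Φ) → ℤ) (W : ↥Φ), U v ≤ μ.orthogonal (W.1 (v W - 1)) := by
    intro v W
    have h1 : U v ≤ orthSplit μ W.1 (v W) :=
      le_of_le_of_eq (le_biSup _ (rfl : v W = v W)) (hUs W (v W)).symm
    exact le_trans h1 inf_le_right
  have hUW2 : ∀ (v : (↥Φ) → ℤ) (W : ↥Φ), U v ≤ W.1 (v W) := by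
    intro v W
    have h1 : U v ≤ orthSplit μ W.1 (v W) :=
      le_of_le_of_eq (le_biSup _ (rfl : v W = v W)) (hUs W (v W)).symm
    exact le_trans h1 inf_le_left
  have hUU : ∀ v v' : (↥Φ) → ℤ, v ≠ v' → ∀ x ∈ U v, ∀ y ∈ U v', μ x y = 0 := by
    have key : ∀ v v' : (↥Φ) → ℤ, ∀ W : ↥Φ, v' W < v W →
        ∀ x ∈ U v, ∀ y ∈ U v', μ x y = 0 := by
      intro v v' W hlt x hx y hy
      have hy2 : y ∈ W.1 (v W - 1) :=
        (hΦ'fil W.1 (hΦ W.2)).1 (by omega : v' W ≤ v W - 1) (hUW2 v' W hy)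
      have h0 := (hUW1 v W hx) y hy2
      rw [hμsymm]
      exact h0
    intro v v' hne x hx y hy
    obtain ⟨W, hW⟩ := Function.ne_iff.mp hne
    rcases lt_or_gt_of_ne hW with h | h
    · rw [hμsymm]; exact key v' v W h y hy x hx
    · exact key v v' W h x hx y hy
  -- (G1)
  have hG1 : ∀ (w : (↥Φ') → ℤ) (W' : ↥Φ'), D w ≤ W'.1 (w W') := by
    intro w W'
    rw [hF1 W' (w W')]
    exact le_biSup _ (le_refl (w W'))
  -- U pieces lie in sums of D pieces
  have hUsub : ∀ v', U v' ≤ ⨆ w ∈ {w : (↥Φ') → ℤ | r w ≤ v'}, D w := by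
    intro v' y hy
    rw [my_mem_biSup_iff hDint]
    intro w hw
    rw [Set.mem_setOf_eq, Pi.le_def] at hw
    obtain ⟨W, hW⟩ := not_forall.mp hw
    have hy2 : y ∈ (Set.inclusion hΦ W).1 (v' W) := hUW2 v' W hy
    rw [hF1 (Set.inclusion hΦ W) (v' W)] at hy2
    exact (my_mem_biSup_iff hDint _ y).mp hy2 w hW
  have hDsub : ∀ w, D w ≤ ⨆ v' ∈ {v' : (↥Φ) → ℤ | v' ≤ r w}, U v' := by
    intro w y hy
    rw [my_mem_biSup_iff hUint]
    intro v' hv'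
    rw [Set.mem_setOf_eq, Pi.le_def] at hv'
    obtain ⟨W, hW⟩ := not_forall.mp hv'
    have hy2 : y ∈ W.1 (r w W) := hG1 w (Set.inclusion hΦ W) hy
    rw [hF2 W (r w W)] at hy2
    exact (my_mem_biSup_iff hUint _ y).mp hy2 v' hW
  -- claim 1
  have hclaim1 : ∀ v, Disjoint (E v) (⨆ v' ∈ {v' : (↥Φ) → ℤ | v' ≠ v}, U v') := by
    intro v
    refine disjoint_iff.mpr (eq_bot_iff.mpr fun x hx => ?_)
    obtain ⟨hx1, hx2⟩ := Submodule.mem_inf.mp hx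
    have hxW : ∀ W : ↥Φ, x ∈ W.1 (v W) := by
      intro W
      refine (show E v ≤ W.1 (v W) from ?_) hx1
      refine iSup₂_le fun w' hw' => ?_
      have hcoord : w' (Set.inclusion hΦ W) = v W := by
        rw [show w' (Set.inclusion hΦ W) = r w' W from rfl, hw']
      exact hcoord ▸ hG1 w' (Set.inclusion hΦ W)
    have hxsupp : x ∈ ⨆ v' ∈ {v' : (↥Φ) → ℤ | v' ≤ v ∧ v' ≠ v}, U v' := by
      rw [my_mem_biSup_iff hUint]
      intro v' hv'
      rw [Set.mem_setOf_eq] at hv'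
      by_cases hvv : v' = v
      · subst hvv
        exact (my_mem_biSup_iff hUint _ x).mp hx2 v' (by simp)
      · have hnle : ¬ v' ≤ v := fun h => hv' ⟨h, hvv⟩
        rw [Pi.le_def] at hnle
        obtain ⟨W, hW⟩ := not_forall.mp hnle
        have hxx := hxW W
        rw [hF2 W (v W)] at hxx
        exact (my_mem_biSup_iff hUint _ x).mp hxx v' hW
    have hY : (⨆ v' ∈ {v' : (↥Φ) → ℤ | v' ≤ v ∧ v' ≠ v}, U v')
        ≤ ⨆ w ∈ {w : (↥Φ') → ℤ | r w ≤ v ∧ r w ≠ v}, D w := by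
      refine iSup₂_le fun v' hv' => ?_
      obtain ⟨hle, hne⟩ := hv'
      refine le_trans (hUsub v') (biSup_mono fun w hw => ?_)
      exact ⟨le_trans hw hle, fun heq => hne (le_antisymm hle (heq ▸ hw))⟩
    have hdisj : Disjoint (E v) (⨆ w ∈ {w : (↥Φ') → ℤ | r w ≤ v ∧ r w ≠ v}, D w) := by
      refine my_disjoint_biSup hDint ?_
      rintro w (hw1 : r w = v) ⟨-, hw3⟩
      exact hw3 hw1
    simpa using hdisj.le_bot (Submodule.mem_inf.mpr ⟨hx1, hY hxsupp⟩)
  -- regrouping E sums as D sums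
  have hEgroup : ∀ (A : Set ((↥Φ) → ℤ)), (⨆ v' ∈ A, E v')
      = ⨆ w ∈ {w : (↥Φ') → ℤ | r w ∈ A}, D w := by
    intro A
    exact (my_biSup_fiber D r A).symm
  -- claim 2
  have hclaim2 : ∀ v, Disjoint (U v) (⨆ v' ∈ {v' : (↥Φ) → ℤ | v' ≠ v}, E v') := by
    intro v
    refine disjoint_iff.mpr (eq_bot_iff.mpr fun x hx => ?_)
    obtain ⟨hx1, hx2⟩ := Submodule.mem_inf.mp hx
    rw [hEgroup {v' | v' ≠ v}] at hx2
    have hxY : x ∈ ⨆ w ∈ {w : (↥Φ') → ℤ | r w ≤ v ∧ r w ≠ v}, D w := by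
      rw [my_mem_biSup_iff hDint]
      intro w hw
      rw [Set.mem_setOf_eq] at hw
      by_cases hle : r w ≤ v
      · have hwv : r w = v := by
          by_contra hne
          exact hw ⟨hle, hne⟩
        exact (my_mem_biSup_iff hDint _ x).mp hx2 w (by simp [hwv])
      · exact (my_mem_biSup_iff hDint _ x).mp ((hUsub v) hx1) w hle
    have hYU : (⨆ w ∈ {w : (↥Φ') → ℤ | r w ≤ v ∧ r w ≠ v}, D w)
        ≤ ⨆ v' ∈ {v' : (↥Φ) → ℤ | v' ≤ v ∧ v' ≠ v}, U v' := by
      refine iSup₂_le fun w hw => ?_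
      obtain ⟨hle, hne⟩ := hw
      refine le_trans (hDsub w) (biSup_mono fun v' hv' => ?_)
      exact ⟨le_trans hv' hle, fun heq => hne (le_antisymm hle (heq ▸ hv'))⟩
    have hUvsingle : U v = ⨆ v' ∈ ({v} : Set ((↥Φ) → ℤ)), U v' := by simp
    have hdisj : Disjoint (U v) (⨆ v' ∈ {v' : (↥Φ) → ℤ | v' ≤ v ∧ v' ≠ v}, U v') := by
      rw [hUvsingle]
      refine my_disjoint_biSup hUint ?_
      rintro v' hv1 ⟨-, hv3⟩
      exact hv3 (by simpa using hv1)
    simpa using hdisj.le_bot (Submodule.mem_inf.mpr ⟨hx1, hYU hxY⟩)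
  -- E is an internal decomposition
  have hEtop : iSup E = ⊤ := by
    rw [← hDtop]
    apply le_antisymm
    · exact iSup_le fun v => iSup₂_le fun w _ => le_iSup D w
    · refine iSup_le fun w => ?_
      exact le_trans (le_biSup _ (rfl : r w = r w) : D w ≤ E (r w)) (le_iSup E (r w))
  have hEindep : iSupIndep E := by
    intro v
    show Disjoint (E v) _
    have h0 : (⨆ (j) (_ : j ≠ v), E j) = ⨆ v' ∈ {v' : (↥Φ) → ℤ | v' ≠ v}, E v' := rfl
    rw [h0, hEgroup {v' | v' ≠ v}]
    exact my_disjoint_biSup hDint (fun w hw1 hw2 => hw2 hw1)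
  have hEint : DirectSum.IsInternal E :=
    DirectSum.isInternal_submodule_of_iSupIndep_of_iSup_eq_top hEindep hEtop
  -- complement rank identity
  have hcompl : ∀ {κ : Type _} (P : κ → Submodule ℝ V), iSupIndep P → iSup P = ⊤ →
      ∀ v, Module.finrank ℝ ↥(P v)
        + Module.finrank ℝ ↥(⨆ v' ∈ {v' : κ | v' ≠ v}, P v') = Module.finrank ℝ V := by
    intro κ P hind htop v
    have hdis : Disjoint (P v) (⨆ v' ∈ {v' : κ | v' ≠ v}, P v') := hind v
    have hsup : P v ⊔ (⨆ v' ∈ {v' : κ | v' ≠ v}, P v') = ⊤ := by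
      rw [← htop]
      apply le_antisymm
      · exact sup_le (le_iSup P v) (iSup₂_le fun v' _ => le_iSup P v')
      · refine iSup_le fun v' => ?_
        by_cases h : v' = v
        · subst h; exact le_sup_left
        · exact le_trans (le_biSup _ (h : v' ∈ {v' : κ | v' ≠ v})) le_sup_right
    have hh := Submodule.finrank_sup_add_finrank_inf_eq (P v)
      (⨆ v' ∈ {v' : κ | v' ≠ v}, P v')
    rw [hsup, hdis.eq_bot, finrank_bot, finrank_top, add_zero] at hh
    exact hh.symm
  have hrankEU : ∀ v, Module.finrank ℝ ↥(E v) = Module.finrank ℝ ↥(U v) := by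
    intro v
    have h1 := hcompl U hUindep hUtop v
    have h2 := hcompl E hEindep hEtop v
    have h3 : Module.finrank ℝ ↥(E v)
        + Module.finrank ℝ ↥(⨆ v' ∈ {v' : (↥Φ) → ℤ | v' ≠ v}, U v')
        ≤ Module.finrank ℝ V := by
      have hh := Submodule.finrank_sup_add_finrank_inf_eq (E v)
        (⨆ v' ∈ {v' : (↥Φ) → ℤ | v' ≠ v}, U v')
      rw [(hclaim1 v).eq_bot, finrank_bot, add_zero] at hh
      rw [← hh]
      exact Submodule.finrank_le _
    have h4 : Module.finrank ℝ ↥(U v)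
        + Module.finrank ℝ ↥(⨆ v' ∈ {v' : (↥Φ) → ℤ | v' ≠ v}, E v')
        ≤ Module.finrank ℝ V := by
      have hh := Submodule.finrank_sup_add_finrank_inf_eq (U v)
        (⨆ v' ∈ {v' : (↥Φ) → ℤ | v' ≠ v}, E v')
      rw [(hclaim2 v).eq_bot, finrank_bot, add_zero] at hh
      rw [← hh]
      exact Submodule.finrank_le _
    omega
  obtain ⟨g0, hg0⟩ := my_exists_equiv hEint hUint hrankEU
  -- a ranking of the (finitely many) nonzero indices
  set L : List ((↥Φ') → ℤ) := hDfin.toFinset.toList with hL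
  set ρ : ((↥Φ') → ℤ) → ℕ := fun w => L.idxOf w with hρ
  have hmemL : ∀ w, D w ≠ ⊥ → w ∈ L := by
    intro w hw
    rw [hL, Finset.mem_toList, Set.Finite.mem_toFinset]
    exact hw
  have hρinj : ∀ w w', D w ≠ ⊥ → D w' ≠ ⊥ → ρ w = ρ w' → w = w' :=
    fun w w' h1 h2 h3 => (List.idxOf_inj (hmemL w h1)).mp h3
  have hρlt : ∀ w w', D w ≠ ⊥ → D w' = ⊥ → ρ w < ρ w' := by
    intro w w' h1 h2
    have hw' : w' ∉ L := by
      rw [hL, Finset.mem_toList, Set.Finite.mem_toFinset]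
      simpa using h2
    have e1 : ρ w' = L.length := List.idxOf_eq_length hw'
    have e2 : ρ w < L.length := List.idxOf_lt_length_iff.mpr (hmemL w h1)
    omega
  set Q : ((↥Φ') → ℤ) → Submodule ℝ V :=
    fun w => ⨆ w' ∈ {w' | r w' = r w ∧ ρ w' ≤ ρ w}, D w' with hQ
  set Q' : ((↥Φ') → ℤ) → Submodule ℝ V :=
    fun w => ⨆ w' ∈ {w' | r w' = r w ∧ ρ w' < ρ w}, D w' with hQ'
  set T : ((↥Φ') → ℤ) → Submodule ℝ V :=
    fun w => Submodule.map (g0 : V →ₗ[ℝ] V) (Q w)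
      ⊓ μ.orthogonal (Submodule.map (g0 : V →ₗ[ℝ] V) (Q' w)) with hT
  have hQ'Q : ∀ w, Q' w ≤ Q w := by
    intro w
    exact biSup_mono (fun w' hw' => ⟨hw'.1, hw'.2.le⟩)
  have hQE : ∀ w, Q w ≤ E (r w) := by
    intro w
    exact biSup_mono (fun w' hw' => hw'.1)
  have hTU : ∀ w, T w ≤ U (r w) := by
    intro w
    refine le_trans inf_le_left ?_
    rw [← hg0 (r w)]
    exact Submodule.map_mono (hQE w)
  have hQsplit : ∀ w, Q' w ⊔ D w = Q w := by
    intro w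
    apply le_antisymm
    · refine sup_le (hQ'Q w) ?_
      exact le_biSup _ (show w ∈ {w' | r w' = r w ∧ ρ w' ≤ ρ w} from ⟨rfl, le_refl _⟩)
    · refine iSup₂_le fun w' hw' => ?_
      obtain ⟨h1, h2⟩ := hw'
      by_cases hw'0 : D w' = ⊥
      · rw [hw'0]; exact bot_le
      rcases lt_or_eq_of_le h2 with hlt | heq
      · exact le_trans (le_biSup _
          (show w' ∈ {w'' | r w'' = r w ∧ ρ w'' < ρ w} from ⟨h1, hlt⟩)) le_sup_left
      · by_cases hw0 : D w = ⊥
        · exact absurd heq (ne_of_lt (hρlt w' w hw'0 hw0))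
        · rw [hρinj w' w hw'0 hw0 heq]; exact le_sup_right
  have hT0 : ∀ w, D w = ⊥ → T w = ⊥ := by
    intro w hD
    have hQQ' : Q w = Q' w := by
      rw [← hQsplit w, hD, sup_bot_eq]
    rw [hT]
    show Submodule.map (g0 : V →ₗ[ℝ] V) (Q w)
      ⊓ μ.orthogonal (Submodule.map (g0 : V →ₗ[ℝ] V) (Q' w)) = ⊥
    rw [hQQ']
    exact my_inf_orthogonal_eq_bot hμpos _
  -- pairwise orthogonality of T pieces
  have hTorth : ∀ w w', w ≠ w' → ∀ x ∈ T w, ∀ y ∈ T w', μ x y = 0 := by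
    have key1 : ∀ w w', r w = r w' → ρ w' < ρ w → ∀ x ∈ T w, ∀ y ∈ T w', μ x y = 0 := by
      intro w w' hfib hlt x hx y hy
      have hy2 : y ∈ Submodule.map (g0 : V →ₗ[ℝ] V) (Q' w) := by
        have hsub : Q w' ≤ Q' w :=
          biSup_mono (fun w'' hw'' => ⟨hw''.1.trans hfib.symm, lt_of_le_of_lt hw''.2 hlt⟩)
        exact Submodule.map_mono hsub ((Submodule.mem_inf.mp hy).1)
      have hx2 := (Submodule.mem_inf.mp hx).2
      rw [hμsymm]
      exact hx2 y hy2
    intro w w' hne x hx y hy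
    by_cases hw0 : D w = ⊥
    · have : x = 0 := by
        rw [hT0 w hw0] at hx
        simpa using hx
      simp [this]
    by_cases hw'0 : D w' = ⊥
    · have : y = 0 := by
        rw [hT0 w' hw'0] at hy
        simpa using hy
      simp [this]
    by_cases hfib : r w = r w'
    · have hρne : ρ w ≠ ρ w' := fun h => hne (hρinj w w' hw0 hw'0 h)
      rcases lt_or_gt_of_ne hρne with hlt | hgt
      · rw [hμsymm]; exact key1 w' w hfib.symm hlt y hy x hx
      · exact key1 w w' hfib hgt x hx y hy
    · exact hUU (r w) (r w') hfib x (hTU w hx) y (hTU w' hy)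
  -- chain lemma: downward closed finsets in a fiber
  have hchain : ∀ (F : Finset ((↥Φ') → ℤ)), ∀ v : (↥Φ) → ℤ,
      (∀ w ∈ F, r w = v ∧ D w ≠ ⊥) →
      (∀ w w', w' ∈ F → r w = v → D w ≠ ⊥ → ρ w ≤ ρ w' → w ∈ F) →
      (⨆ w ∈ F, T w) = Submodule.map (g0 : V →ₗ[ℝ] V) (⨆ w ∈ F, D w) := by
    intro F
    induction F using Finset.strongInduction with
    | _ F ih =>
      intro v hmem hclosed
      rcases F.eq_empty_or_nonempty with rfl | hne
      · simp
      obtain ⟨m, hmF, hmax⟩ := F.exists_max_image ρ hne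
      have hrm : r m = v := (hmem m hmF).1
      have hDm : D m ≠ ⊥ := (hmem m hmF).2
      have hQm : Q m = ⨆ w ∈ F, D w := by
        apply le_antisymm
        · refine iSup₂_le fun w' hw' => ?_
          obtain ⟨h1, h2⟩ := hw'
          by_cases h0 : D w' = ⊥
          · rw [h0]; exact bot_le
          · exact le_biSup _ (hclosed w' m hmF (h1.trans hrm) h0 h2)
        · refine iSup₂_le fun w hw => ?_
          exact le_biSup _ (show w ∈ {w' | r w' = r m ∧ ρ w' ≤ ρ m} from
            ⟨((hmem w hw).1).trans hrm.symm, hmax w hw⟩)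
      have hQ'm : Q' m = ⨆ w ∈ F.erase m, D w := by
        apply le_antisymm
        · refine iSup₂_le fun w' hw' => ?_
          obtain ⟨h1, h2⟩ := hw'
          by_cases h0 : D w' = ⊥
          · rw [h0]; exact bot_le
          · have hw'F : w' ∈ F := hclosed w' m hmF (h1.trans hrm) h0 h2.le
            have hne' : w' ≠ m := fun he => absurd (he ▸ h2) (lt_irrefl _)
            exact le_biSup _ (Finset.mem_erase.mpr ⟨hne', hw'F⟩)
        · refine iSup₂_le fun w hw => ?_
          obtain ⟨hne', hwF⟩ := Finset.mem_erase.mp hw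
          have h2 : ρ w < ρ m := lt_of_le_of_ne (hmax w hwF)
            (fun h => hne' (hρinj w m (hmem w hwF).2 hDm h))
          exact le_biSup _ (show w ∈ {w' | r w' = r m ∧ ρ w' < ρ m} from
            ⟨((hmem w hwF).1).trans hrm.symm, h2⟩)
      have hFe : F = insert m (F.erase m) := (Finset.insert_erase hmF).symm
      have hIH : (⨆ w ∈ F.erase m, T w)
          = Submodule.map (g0 : V →ₗ[ℝ] V) (⨆ w ∈ F.erase m, D w) := by
        refine ih (F.erase m) (Finset.erase_ssubset hmF) v
          (fun w hw => hmem w (Finset.mem_of_mem_erase hw)) ?_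
        intro w w' hw' hrw hDw hle
        refine Finset.mem_erase.mpr
          ⟨?_, hclosed w w' (Finset.mem_of_mem_erase hw') hrw hDw hle⟩
        intro he
        subst he
        have h1 : ρ w' ≤ ρ w := hmax w' (Finset.mem_of_mem_erase hw')
        have h2 : w' = w :=
          hρinj w' w (hmem w' (Finset.mem_of_mem_erase hw')).2 hDw (le_antisymm h1 hle)
        exact (Finset.mem_erase.mp hw').1 h2
      have hsup : Submodule.map (g0 : V →ₗ[ℝ] V) (Q' m) ⊔ T m
          = Submodule.map (g0 : V →ₗ[ℝ] V) (Q m) :=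
        my_sup_inf_orthogonal hμsymm hμpos (Submodule.map_mono (hQ'Q m))
      have e1 : (⨆ w ∈ F, T w) = T m ⊔ ⨆ w ∈ F.erase m, T w := by
        conv_lhs => rw [hFe]
        exact Finset.iSup_insert m (F.erase m) T
      have e2 : (⨆ w ∈ F, D w) = Q m := hQm.symm
      rw [e1, hIH, ← hQ'm, e2, sup_comm]
      exact hsup
  -- fiber sums of T give U
  have hTfiber : ∀ v, (⨆ w ∈ {w : (↥Φ') → ℤ | r w = v}, T w) = U v := by
    intro v
    set Fv : Finset ((↥Φ') → ℤ) := hDfin.toFinset.filter (fun w => r w = v) with hFv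
    have hmem : ∀ w ∈ Fv, r w = v ∧ D w ≠ ⊥ := by
      intro w hw
      rw [hFv, Finset.mem_filter, Set.Finite.mem_toFinset] at hw
      exact ⟨hw.2, hw.1⟩
    have hclosed : ∀ w w', w' ∈ Fv → r w = v → D w ≠ ⊥ → ρ w ≤ ρ w' → w ∈ Fv := by
      intro w w' _ hrw hDw _
      rw [hFv, Finset.mem_filter, Set.Finite.mem_toFinset]
      exact ⟨hDw, hrw⟩
    have hc := hchain Fv v hmem hclosed
    have e1 : (⨆ w ∈ {w : (↥Φ') → ℤ | r w = v}, T w) = ⨆ w ∈ Fv, T w := by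
      apply le_antisymm
      · refine iSup₂_le fun w hw => ?_
        by_cases h0 : D w = ⊥
        · rw [hT0 w h0]; exact bot_le
        · exact le_biSup _ (show w ∈ Fv by
            rw [hFv, Finset.mem_filter, Set.Finite.mem_toFinset]; exact ⟨h0, hw⟩)
      · exact iSup₂_le fun w hw => le_biSup _ ((hmem w hw).1 : r w = v)
    have e2 : (⨆ w ∈ Fv, D w) = E v := by
      apply le_antisymm
      · exact iSup₂_le fun w hw => le_biSup _ ((hmem w hw).1 : r w = v)
      · refine iSup₂_le fun w hw => ?_
        by_cases h0 : D w = ⊥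
        · rw [h0]; exact bot_le
        · exact le_biSup _ (show w ∈ Fv by
            rw [hFv, Finset.mem_filter, Set.Finite.mem_toFinset]; exact ⟨h0, hw⟩)
    rw [e1, hc, e2, hg0 v]
  -- ranks of D and T pieces agree
  have hrankDT : ∀ w, Module.finrank ℝ ↥(D w) = Module.finrank ℝ ↥(T w) := by
    intro w
    have hdisj1 : Disjoint (Q' w) (D w) := by
      have h1 : Q' w ≤ ⨆ (j) (_ : j ≠ w), D j :=
        iSup₂_le fun w' hw' => le_iSup₂ (f := fun j _ => D j) w'
          (fun he => absurd (he ▸ hw'.2) (lt_irrefl _))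
      exact ((hDindep w).mono_right h1).symm
    have f1 : Module.finrank ℝ ↥(Q' w) + Module.finrank ℝ ↥(D w)
        = Module.finrank ℝ ↥(Q w) := by
      have hh := Submodule.finrank_sup_add_finrank_inf_eq (Q' w) (D w)
      rw [hdisj1.eq_bot, finrank_bot, add_zero, hQsplit w] at hh
      exact hh.symm
    have hsup2 : Submodule.map (g0 : V →ₗ[ℝ] V) (Q' w) ⊔ T w
        = Submodule.map (g0 : V →ₗ[ℝ] V) (Q w) :=
      my_sup_inf_orthogonal hμsymm hμpos (Submodule.map_mono (hQ'Q w))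
    have hdisj2 : Disjoint (Submodule.map (g0 : V →ₗ[ℝ] V) (Q' w)) (T w) := by
      refine disjoint_iff.mpr (eq_bot_iff.mpr ?_)
      refine le_trans (inf_le_inf_left _ (inf_le_right : T w ≤ _)) ?_
      rw [my_inf_orthogonal_eq_bot hμpos]
    have f2 : Module.finrank ℝ ↥(Submodule.map (g0 : V →ₗ[ℝ] V) (Q' w))
        + Module.finrank ℝ ↥(T w)
        = Module.finrank ℝ ↥(Submodule.map (g0 : V →ₗ[ℝ] V) (Q w)) := by
      have hh := Submodule.finrank_sup_add_finrank_inf_eq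
        (Submodule.map (g0 : V →ₗ[ℝ] V) (Q' w)) (T w)
      rw [hdisj2.eq_bot, finrank_bot, add_zero, hsup2] at hh
      exact hh.symm
    have g1 := LinearEquiv.finrank_map_eq g0 (Q' w)
    have g2 := LinearEquiv.finrank_map_eq g0 (Q w)
    omega
  -- T is an internal decomposition
  have hTtop : iSup T = ⊤ := by
    rw [← top_le_iff, ← hUtop]
    refine iSup_le fun v => ?_
    rw [← hTfiber v]
    exact iSup₂_le fun w _ => le_iSup T w
  have hTindep : iSupIndep T := by
    intro w
    have horth : (⨆ (j) (_ : j ≠ w), T j) ≤ μ.orthogonal (T w) := by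
      refine iSup₂_le fun w' hw' => ?_
      intro y hy
      rw [LinearMap.BilinForm.mem_orthogonal_iff]
      intro n hn
      exact hTorth w w' (fun h => hw' h.symm) n hn y hy
    refine disjoint_iff.mpr (eq_bot_iff.mpr ?_)
    refine le_trans (inf_le_inf_left _ horth) ?_
    rw [my_inf_orthogonal_eq_bot hμpos]
  have hTint : DirectSum.IsInternal T :=
    DirectSum.isInternal_submodule_of_iSupIndep_of_iSup_eq_top hTindep hTtop
  obtain ⟨g, hgT⟩ := my_exists_equiv hDint hTint hrankDT
  have hmapD : ∀ (A : Set ((↥Φ') → ℤ)),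
      Submodule.map (g : V →ₗ[ℝ] V) (⨆ w ∈ A, D w) = ⨆ w ∈ A, T w := by
    intro A
    simp only [Submodule.map_iSup]
    exact biSup_congr fun w _ => hgT w
  refine ⟨g, ?_, ?_⟩
  · -- g preserves the filtrations in Φ
    intro W0 hW0 k
    have h1' : W0 k = ⨆ w ∈ {w : (↥Φ') → ℤ | r w ⟨W0, hW0⟩ ≤ k}, D w :=
      hF1 (Set.inclusion hΦ ⟨W0, hW0⟩) k
    calc Submodule.map (g : V →ₗ[ℝ] V) (W0 k)
        = ⨆ w ∈ {w : (↥Φ') → ℤ | r w ⟨W0, hW0⟩ ≤ k}, T w := by rw [h1', hmapD]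
      _ = ⨆ v ∈ {v : (↥Φ) → ℤ | v ⟨W0, hW0⟩ ≤ k}, ⨆ w ∈ {w | r w = v}, T w :=
          my_biSup_fiber T r {v : (↥Φ) → ℤ | v ⟨W0, hW0⟩ ≤ k}
      _ = ⨆ v ∈ {v : (↥Φ) → ℤ | v ⟨W0, hW0⟩ ≤ k}, U v :=
          biSup_congr fun v _ => hTfiber v
      _ = W0 k := (hF2 ⟨W0, hW0⟩ k).symm
  · -- the new orthogonal splittings are compatible
    have hgT' : (fun w => Submodule.map (g : V →ₗ[ℝ] V) (D w)) = T := funext hgT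
    refine ⟨fun w => Submodule.map (g : V →ₗ[ℝ] V) (D w), ?_, ?_, ?_, ?_⟩
    · rw [hgT']; exact hTindep
    · rw [hgT']; exact hTtop
    · refine Set.Finite.subset hDfin fun w hw => ?_
      simp only [Set.mem_setOf_eq] at hw ⊢
      intro h0
      exact hw (by rw [h0, Submodule.map_bot])
    · intro i k
      show Submodule.map (g : V →ₗ[ℝ] V) (i.1 k)
          ⊓ μ.orthogonal (Submodule.map (g : V →ₗ[ℝ] V) (i.1 (k-1)))
          = ⨆ w ∈ {w : (↥Φ') → ℤ | w i = k}, Submodule.map (g : V →ₗ[ℝ] V) (D w)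
      have hM : Submodule.map (g : V →ₗ[ℝ] V) (i.1 k)
          = ⨆ w ∈ {w : (↥Φ') → ℤ | w i ≤ k}, T w := by rw [hF1 i k, hmapD]
      have hN : Submodule.map (g : V →ₗ[ℝ] V) (i.1 (k-1))
          = ⨆ w ∈ {w : (↥Φ') → ℤ | w i ≤ k-1}, T w := by rw [hF1 i (k-1), hmapD]
      have hX : (⨆ w ∈ {w : (↥Φ') → ℤ | w i = k}, Submodule.map (g : V →ₗ[ℝ] V) (D w))
          = ⨆ w ∈ {w : (↥Φ') → ℤ | w i = k}, T w := biSup_congr fun w _ => hgT w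
      rw [hM, hN, hX]
      apply my_inf_orthogonal_eq hμpos
      · apply le_antisymm
        · refine sup_le (biSup_mono fun w hw => ?_) (biSup_mono fun w hw => ?_)
          · have hw' : w i ≤ k - 1 := hw
            show w i ≤ k
            omega
          · exact le_of_eq hw
        · refine iSup₂_le fun w hw => ?_
          rcases eq_or_lt_of_le (show w i ≤ k from hw) with heq | hlt
          · exact le_trans (le_biSup _ (heq : w i = k)) le_sup_right
          · exact le_trans (le_biSup _ (show w i ≤ k - 1 by omega)) le_sup_left
      · refine iSup₂_le fun w hw => ?_
        intro y hy
        rw [LinearMap.BilinForm.mem_orthogonal_iff]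
        intro n hn
        have hker : (⨆ w' ∈ {w' : (↥Φ') → ℤ | w' i ≤ k - 1}, T w')
            ≤ LinearMap.ker (μ.flip y) := by
          refine iSup₂_le fun w' hw' => ?_
          intro n' hn'
          simp only [LinearMap.mem_ker, LinearMap.flip_apply]
          refine hTorth w' w (fun h => ?_) n' hn' y hy
          have h1 : w' i ≤ k - 1 := hw'
          have h2 : w i = k := hw
          rw [h] at h1
          omega
        have hfin := hker hn
        simp only [LinearMap.mem_ker, LinearMap.flip_apply] at hfin
        exact hfin
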